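/- Let k ≤ l. Every open face of the level-l alcove geometry in the positive Weyl chamber of sl_k contains a dominant integral weight: precisely, if a is a dominant integral weight with (a, α_i) divisible by l for all simple roots α_i, and I = {i : (a, α_i) = 0}, then the point p = a + Σ_{i∈I} Λ_i lies in the interior of the face F = conv({a} ∪ {a + lΛ_i : i ∈ I}) of the closure of the translated fundamental alcove a + A^+, and p lies in the interior of the positive Weyl chamber. -/

import Mathlib

/-- F is a face of the convex set C: a convex subset such that whenever a point of F is a
proper convex combination of two points of C, both points lie in F. -/
def IsFaceOf (F C : Set (ℕ → ℝ)) : Prop :=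
  F ⊆ C ∧ Convex ℝ F ∧
    ∀ a b : ℕ → ℝ, a ∈ C → b ∈ C → ∀ t : ℝ, 0 < t → t < 1 →
      t • a + (1 - t) • b ∈ F → a ∈ F ∧ b ∈ F

/-- The fundamental weight Λ_i of gl_k, as the vector with 1 in coordinates ≤ i
(including the dummy coordinate 0, which is clamped to coordinate 1). -/
noncomputable def LamV (i : ℕ) : ℕ → ℝ := fun j => if j ≤ i then 1 else 0

/-- The predicate cutting out the face F inside C. -/
def CpAux (k l : ℕ) (a : ℕ → ℝ) (I : Finset ℕ) (x : ℕ → ℝ) : Prop :=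
  (∀ i, 1 ≤ i → i < k → x (i + 1) - a (i + 1) ≤ x i - a i)
    ∧ (x 1 - a 1) - (x k - a k) ≤ (l : ℝ)
    ∧ x 0 = x 1 ∧ (∀ j, k ≤ j → x j = x k)
    ∧ ∀ i, 1 ≤ i → i < k → i ∉ I → x (i + 1) - a (i + 1) = x i - a i

lemma tele (f : ℕ → ℝ) : ∀ b a : ℕ, a ≤ b →
    ∑ i ∈ Finset.Ico a b, (f i - f (i+1)) = f a - f b := by
  intro b
  induction b with
  | zero => intro a ha; interval_cases a; simp
  | succ n ih =>
    intro a ha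
    rcases Nat.lt_or_ge a (n+1) with h | h
    · have h' : a ≤ n := Nat.lt_succ_iff.mp h
      rw [Finset.sum_Ico_succ_top h', ih a h']
      ring
    · have : a = n + 1 := le_antisymm ha h
      subst this; simp

/-- Key telescoping identity: for `x` satisfying `CpAux`, the coordinates of `x` (shifted to
vanish at coordinate `k`) are the combination `a + ∑_{i ∈ I} gap_i · Λ_i`. -/
lemma cp_tele (k l : ℕ) (hk : 1 ≤ k) (a : ℕ → ℝ) (ha0 : a 0 = a 1)
    (hatail : ∀ j, k ≤ j → a j = a k) (I : Finset ℕ) (hIk : ∀ i ∈ I, 1 ≤ i ∧ i < k)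
    (x : ℕ → ℝ) (hx : CpAux k l a I x) (j : ℕ) :
    a j + ∑ i ∈ I, ((x i - a i) - (x (i+1) - a (i+1))) * LamV i j
      = x j - (x k - a k) := by
  set f : ℕ → ℝ := fun i => x i - a i with hf
  have hmain : ∀ j, 1 ≤ j → j ≤ k →
      ∑ i ∈ I, (f i - f (i+1)) * LamV i j = f j - f k := by
    intro j hj1 hjk
    have h1 : ∑ i ∈ I, (f i - f (i+1)) * LamV i j
        = ∑ i ∈ I, (if j ≤ i then f i - f (i+1) else 0) := by
      refine Finset.sum_congr rfl fun i _ => ?_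
      simp only [LamV]
      split <;> ring
    rw [h1, ← Finset.sum_filter]
    have h2 : ∑ i ∈ I.filter (fun i => j ≤ i), (f i - f (i+1))
        = ∑ i ∈ Finset.Ico j k, (f i - f (i+1)) := by
      refine Finset.sum_subset ?_ ?_
      · intro i hi
        rw [Finset.mem_filter] at hi
        exact Finset.mem_Ico.mpr ⟨hi.2, (hIk i hi.1).2⟩
      · intro i hi hni
        rw [Finset.mem_Ico] at hi
        have hiI : i ∉ I := fun h => hni (Finset.mem_filter.mpr ⟨h, hi.1⟩)
        have := hx.2.2.2.2 i (le_trans hj1 hi.1) hi.2 hiI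
        simp only [hf]
        linarith
    rw [h2, tele f k j hjk]
  rcases Nat.eq_zero_or_pos j with hj0 | hj1
  · subst hj0
    have h0 : ∑ i ∈ I, (f i - f (i+1)) * LamV i 0
        = ∑ i ∈ I, (f i - f (i+1)) * LamV i 1 := by
      refine Finset.sum_congr rfl fun i hi => ?_
      have := (hIk i hi).1
      simp only [LamV]
      rw [if_pos (Nat.zero_le i), if_pos this]
    rw [h0, hmain 1 le_rfl hk]
    have := hx.2.2.1
    simp only [hf]
    linarith
  · rcases le_or_gt j k with hjk | hjk
    · rw [hmain j hj1 hjk]; simp only [hf]; ring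
    · have h0 : ∑ i ∈ I, (f i - f (i+1)) * LamV i j = 0 := by
        refine Finset.sum_eq_zero fun i hi => ?_
        have : ¬ j ≤ i := by have := (hIk i hi).2; omega
        simp [LamV, this]
      rw [h0]
      have h1 := hx.2.2.2.2
      have h2 := hx.2.2.2.1 j (le_of_lt hjk)
      have h3 := hatail j (le_of_lt hjk)
      linarith

lemma cp_convex (k l : ℕ) (a : ℕ → ℝ) (I : Finset ℕ) :
    Convex ℝ {x : ℕ → ℝ | CpAux k l a I x} := by
  intro u hu v hv s t hs ht hst
  have hts : t = 1 - s := by linarith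
  subst hts
  simp only [Set.mem_setOf_eq] at hu hv ⊢
  constructor
  · intro i h1 h2
    have e1 := mul_le_mul_of_nonneg_left (hu.1 i h1 h2) hs
    have e2 := mul_le_mul_of_nonneg_left (hv.1 i h1 h2) ht
    simp only [Pi.add_apply, Pi.smul_apply, smul_eq_mul]
    nlinarith [e1, e2]
  refine ⟨?_, ?_, ?_, ?_⟩
  · have e1 := mul_le_mul_of_nonneg_left hu.2.1 hs
    have e2 := mul_le_mul_of_nonneg_left hv.2.1 ht
    simp only [Pi.add_apply, Pi.smul_apply, smul_eq_mul]
    nlinarith [e1, e2]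
  · have e1 := hu.2.2.1
    have e2 := hv.2.2.1
    simp only [Pi.add_apply, Pi.smul_apply, smul_eq_mul]
    rw [e1, e2]
  · intro j hj
    have e1 := hu.2.2.2.1 j hj
    have e2 := hv.2.2.2.1 j hj
    simp only [Pi.add_apply, Pi.smul_apply, smul_eq_mul]
    rw [e1, e2]
  · intro i h1 h2 hiI
    have e1 := hu.2.2.2.2 i h1 h2 hiI
    have e2 := hv.2.2.2.2 i h1 h2 hiI
    simp only [Pi.add_apply, Pi.smul_apply, smul_eq_mul]
    nlinarith [e1, e2]

lemma S_sub_cp (k l : ℕ) (hk : 1 ≤ k) (a : ℕ → ℝ) (ha0 : a 0 = a 1)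
    (hatail : ∀ j, k ≤ j → a j = a k) (I : Finset ℕ) (hIk : ∀ i ∈ I, 1 ≤ i ∧ i < k) :
    ({a} ∪ (fun i => a + (l : ℝ) • LamV i) '' (I : Set ℕ)) ⊆ {x : ℕ → ℝ | CpAux k l a I x} := by
  rintro x (rfl | ⟨i0, hi0, rfl⟩)
  · refine ⟨fun i _ _ => by simp, by simp, ha0, fun j hj => hatail j hj,
      fun i _ _ _ => by simp⟩
  · rw [Finset.mem_coe] at hi0
    obtain ⟨hi01, hi0k⟩ := hIk i0 hi0
    have hval : ∀ j, (a + (l:ℝ) • LamV i0) j = a j + (l:ℝ) * (if j ≤ i0 then (1:ℝ) else 0) := by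
      intro j; simp [LamV, Pi.add_apply]
    refine ⟨?_, ?_, ?_, ?_, ?_⟩
    · intro i h1 h2
      simp only [hval]
      have : ((if i+1 ≤ i0 then (1:ℝ) else 0)) ≤ (if i ≤ i0 then (1:ℝ) else 0) := by
        rcases le_or_gt (i+1) i0 with h | h
        · rw [if_pos h, if_pos (by omega)]
        · rcases le_or_gt i i0 with h' | h'
          · rw [if_pos h', if_neg (by omega)]; norm_num
          · rw [if_neg (by omega), if_neg (by omega)]
      nlinarith [this, Nat.cast_nonneg (α := ℝ) l]
    · simp only [hval]
      rw [if_pos hi01, if_neg (by omega)]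
      simp
    · simp only [hval]
      rw [if_pos (Nat.zero_le i0), if_pos hi01, ha0]
    · intro j hj
      simp only [hval]
      rw [if_neg (by omega), if_neg (by omega), hatail j hj]
    · intro i h1 h2 hiI
      have hne : i ≠ i0 := fun h => hiI (h ▸ hi0)
      simp only [hval]
      have : ((if i+1 ≤ i0 then (1:ℝ) else 0)) = (if i ≤ i0 then (1:ℝ) else 0) := by
        split <;> split <;> first | rfl | omega
      rw [this]
      ring

lemma cp_mem_hull (k l : ℕ) (hk : 1 ≤ k) (hl : 0 < l) (a : ℕ → ℝ) (ha0 : a 0 = a 1)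
    (hatail : ∀ j, k ≤ j → a j = a k) (I : Finset ℕ) (hIk : ∀ i ∈ I, 1 ≤ i ∧ i < k)
    (x : ℕ → ℝ) (hx : CpAux k l a I x) :
    (x - (x k - a k) • (fun _ => (1 : ℝ)))
      ∈ convexHull ℝ ({a} ∪ (fun i => a + (l : ℝ) • LamV i) '' (I : Set ℕ)) := by
  have hl0 : (0:ℝ) < l := by exact_mod_cast hl
  set S : Set (ℕ → ℝ) := {a} ∪ (fun i => a + (l : ℝ) • LamV i) '' (I : Set ℕ) with hS
  set g : ℕ → ℝ := fun i => (x i - a i) - (x (i+1) - a (i+1)) with hg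
  set T : ℝ := ∑ i ∈ I, g i with hT
  have hgpos : ∀ i ∈ I, 0 ≤ g i := by
    intro i hi
    obtain ⟨h1, h2⟩ := hIk i hi
    have := hx.1 i h1 h2
    simp only [hg]; linarith
  have hT1 : T = (x 1 - a 1) - (x k - a k) := by
    have h1 := cp_tele k l hk a ha0 hatail I hIk x hx 1
    have h2 : ∑ i ∈ I, g i * LamV i 1 = T := by
      rw [hT]
      refine Finset.sum_congr rfl fun i hi => ?_
      have := (hIk i hi).1
      simp [LamV, this]
    simp only [hg] at h2
    rw [h2] at h1
    linarith
  have hTl : T ≤ (l : ℝ) := by rw [hT1]; exact hx.2.1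
  have hT0 : 0 ≤ T := Finset.sum_nonneg hgpos
  have hkI : k ∉ I := fun h => by have := (hIk k h).2; omega
  have key := Convex.sum_mem (convex_convexHull ℝ S)
    (t := insert k I)
    (w := fun i => if i = k then 1 - T / l else g i / l)
    (z := fun i => if i = k then a else a + (l:ℝ) • LamV i)
    (by
      intro i hi
      rcases Finset.mem_insert.mp hi with rfl | hi
      · rw [if_pos rfl]
        have : T / l ≤ 1 := by rw [div_le_one hl0]; exact hTl
        linarith
      · rw [if_neg (fun h : i = k => hkI (h ▸ hi))]
        exact div_nonneg (hgpos i hi) (le_of_lt hl0))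
    (by
      rw [Finset.sum_insert hkI, if_pos rfl]
      have : ∑ i ∈ I, (if i = k then 1 - T / l else g i / l) = ∑ i ∈ I, g i / l := by
        refine Finset.sum_congr rfl fun i hi => ?_
        rw [if_neg (fun h : i = k => hkI (h ▸ hi))]
      rw [this, ← Finset.sum_div, ← hT]
      field_simp
      ring)
    (by
      intro i hi
      rcases Finset.mem_insert.mp hi with rfl | hi
      · rw [if_pos rfl]
        exact subset_convexHull ℝ S (Or.inl rfl)
      · rw [if_neg (fun h : i = k => hkI (h ▸ hi))]
        exact subset_convexHull ℝ S (Or.inr ⟨i, Finset.mem_coe.mpr hi, rfl⟩))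
  convert key using 1
  funext j
  rw [Finset.sum_apply]
  rw [Finset.sum_insert hkI]
  have hterm : ∀ i ∈ I, ((if i = k then 1 - T / l else g i / l) •
      (if i = k then a else a + (l:ℝ) • LamV i)) j
      = (a j / l) * g i + g i * LamV i j := by
    intro i hi
    rw [if_neg (fun h : i = k => hkI (h ▸ hi)), if_neg (fun h : i = k => hkI (h ▸ hi))]
    simp only [Pi.smul_apply, Pi.add_apply, smul_eq_mul]
    field_simp
  rw [Finset.sum_congr rfl hterm]
  rw [Finset.sum_add_distrib, ← Finset.mul_sum, ← hT]
  have hkey := cp_tele k l hk a ha0 hatail I hIk x hx j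
  simp only [hg]
  simp only [Pi.sub_apply, Pi.smul_apply, smul_eq_mul, if_pos rfl, Pi.smul_apply, ↓reduceIte]
  rw [show x j - (x k - a k) * 1 = x j - (x k - a k) by ring, ← hkey]
  field_simp
  ring

/-- Let k ≤ l.  Every open face of the level-l alcove geometry in the
positive Weyl chamber of sl_k contains a dominant integral weight: if a is a dominant
integral weight with (a, α_i) divisible by l for all simple roots α_i, and
I = {i : (a, α_i) = 0}, then p = a + Σ_{i∈I} Λ_i lies in the interior (complement of all
proper subfaces) of the face F = conv({a} ∪ {a + lΛ_i : i ∈ I}) (modulo the diagonal) of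
the closure C of the translated fundamental alcove a + A⁺, and p lies in the interior of
the positive Weyl chamber (p_i > p_{i+1} for all i). -/
theorem singular_face_contains_integral_interior_point
    (k l : ℕ) (hk : 2 ≤ k) (hkl : k ≤ l)
    (a : ℕ → ℝ) (ha0 : a 0 = a 1) (hatail : ∀ j, k ≤ j → a j = a k)
    (hdom : ∀ i, 1 ≤ i → i < k → a (i + 1) ≤ a i)
    (haint : ∀ i, 1 ≤ i → i ≤ k → ∃ m : ℤ, a i = (m : ℝ))
    (hdiv : ∀ i, 1 ≤ i → i < k → ∃ m : ℤ, a i - a (i + 1) = (m : ℝ) * (l : ℝ))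
    (I : Finset ℕ) (hI : ∀ i, i ∈ I ↔ 1 ≤ i ∧ i < k ∧ a i = a (i + 1))
    (C : Set (ℕ → ℝ))
    (hC : C = {x | (∀ i, 1 ≤ i → i < k → x (i + 1) - a (i + 1) ≤ x i - a i)
      ∧ (x 1 - a 1) - (x k - a k) ≤ (l : ℝ)
      ∧ x 0 = x 1 ∧ ∀ j, k ≤ j → x j = x k})
    (F : Set (ℕ → ℝ))
    (hF : F = {y | ∃ c : ℝ, (y - c • (fun _ => (1 : ℝ)))
        ∈ convexHull ℝ ({a} ∪ (fun i => a + (l : ℝ) • LamV i) '' (I : Set ℕ))})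
    (p : ℕ → ℝ) (hp : p = a + ∑ i ∈ I, LamV i) :
    IsFaceOf F C ∧ p ∈ F ∧ (∀ G, IsFaceOf G F → G ≠ F → p ∉ G)
      ∧ ∀ i, 1 ≤ i → i < k → p (i + 1) < p i := by
  have hk1 : 1 ≤ k := by omega
  have hl : 0 < l := by omega
  have hl0 : (0:ℝ) < l := by exact_mod_cast hl
  have hl2 : (2:ℝ) ≤ l := by exact_mod_cast le_trans hk hkl
  have hIk : ∀ i ∈ I, 1 ≤ i ∧ i < k := fun i hi => ⟨((hI i).mp hi).1, ((hI i).mp hi).2.1⟩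
  -- F is exactly the CpAux set
  have hFeq : F = {x | CpAux k l a I x} := by
    ext x
    rw [hF]
    constructor
    · rintro ⟨c, hc⟩
      have hhull : convexHull ℝ ({a} ∪ (fun i => a + (l : ℝ) • LamV i) '' (I : Set ℕ))
          ⊆ {x : ℕ → ℝ | CpAux k l a I x} :=
        convexHull_min (S_sub_cp k l hk1 a ha0 hatail I hIk) (cp_convex k l a I)
      have hmem : CpAux k l a I (x - c • (fun _ => (1:ℝ))) := hhull hc
      obtain ⟨m1, m2, m3, m4, m5⟩ := hmem
      simp only [Pi.sub_apply, Pi.smul_apply, smul_eq_mul, mul_one] at m1 m2 m3 m4 m5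
      refine ⟨fun i h1 h2 => by have := m1 i h1 h2; linarith, by linarith [m2], by linarith [m3],
        fun j hj => by have := m4 j hj; linarith, fun i h1 h2 h3 => by have := m5 i h1 h2 h3; linarith⟩
    · intro hx
      exact ⟨x k - a k, cp_mem_hull k l hk1 hl a ha0 hatail I hIk x hx⟩
  -- card bound
  have hcard : (I.card : ℝ) ≤ (l : ℝ) - 1 := by
    have h1 : I ⊆ Finset.Ico 1 k := fun i hi => Finset.mem_Ico.mpr (hIk i hi)
    have h2 : I.card ≤ k - 1 := by
      have := Finset.card_le_card h1
      simpa [Nat.card_Ico] using this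
    have h3 : I.card ≤ l - 1 := by omega
    have : ((l:ℕ) - 1 : ℕ) = ((l:ℝ) - 1 : ℝ) := by
      push_cast [Nat.cast_sub (by omega : 1 ≤ l)]; ring
    calc (I.card : ℝ) ≤ ((l - 1 : ℕ) : ℝ) := by exact_mod_cast h3
      _ = (l:ℝ) - 1 := by push_cast [Nat.cast_sub (by omega : 1 ≤ l)]; ring
  -- coordinates of p
  have hpj : ∀ j, p j = a j + ∑ i ∈ I, (if j ≤ i then (1:ℝ) else 0) := by
    intro j
    rw [hp]
    simp [LamV, Finset.sum_apply]
  -- gap of p at i ∈ I is 1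
  have hgapP : ∀ i ∈ I, (p i - a i) - (p (i+1) - a (i+1)) = 1 := by
    intro i hi
    simp only [hpj]
    rw [show ∀ A B : ℝ, (a i + A - a i) - (a (i+1) + B - a (i+1)) = A - B from fun A B => by ring]
    rw [← Finset.sum_sub_distrib]
    have : ∀ i' ∈ I, ((if i ≤ i' then (1:ℝ) else 0) - (if i+1 ≤ i' then 1 else 0))
        = if i' = i then 1 else 0 := by
      intro i' _
      rcases lt_trichotomy i' i with h | h | h
      · rw [if_neg (by omega), if_neg (by omega), if_neg (by omega)]; ring
      · rw [if_pos (by omega), if_neg (by omega), if_pos h]; ring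
      · rw [if_pos (by omega), if_pos (by omega), if_neg (by omega)]; ring
    rw [Finset.sum_congr rfl this, Finset.sum_ite_eq' I i (fun _ => (1:ℝ)), if_pos hi]
  -- gap of p at i ∉ I is 0
  have hgapP0 : ∀ i, i ∉ I → (p (i+1) - a (i+1)) = (p i - a i) := by
    intro i hiI
    simp only [hpj]
    rw [show ∀ B : ℝ, a (i+1) + B - a (i+1) = B from fun B => by ring,
      show ∀ A : ℝ, a i + A - a i = A from fun A => by ring]
    refine Finset.sum_congr rfl fun i' hi' => ?_
    have hne : i' ≠ i := fun h => hiI (h ▸ hi')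
    rcases lt_trichotomy i' i with h | h | h
    · rw [if_neg (by omega), if_neg (by omega)]
    · exact absurd h hne
    · rw [if_pos (by omega), if_pos (by omega)]
  -- total gap of p
  have hTp : (p 1 - a 1) - (p k - a k) = (I.card : ℝ) := by
    simp only [hpj]
    have h1 : ∑ i ∈ I, (if 1 ≤ i then (1:ℝ) else 0) = (I.card : ℝ) := by
      rw [Finset.sum_congr rfl fun i hi => if_pos (hIk i hi).1]
      simp
    have h2 : ∑ i ∈ I, (if k ≤ i then (1:ℝ) else 0) = 0 := by
      refine Finset.sum_eq_zero fun i hi => if_neg (by have := (hIk i hi).2; omega)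
    rw [h1, h2]; ring
  -- p satisfies CpAux
  have hpcp : CpAux k l a I p := by
    refine ⟨?_, ?_, ?_, ?_, ?_⟩
    · intro i h1 h2
      by_cases hiI : i ∈ I
      · have := hgapP i hiI; linarith
      · have := hgapP0 i hiI; linarith
    · rw [hTp]; linarith
    · simp only [hpj]
      rw [ha0]
      congr 1
      refine Finset.sum_congr rfl fun i hi => ?_
      rw [if_pos (Nat.zero_le i), if_pos (hIk i hi).1]
    · intro j hj
      simp only [hpj]
      rw [hatail j hj]
      congr 1
      refine Finset.sum_congr rfl fun i hi => ?_
      rw [if_neg (by have := (hIk i hi).2; omega), if_neg (by have := (hIk i hi).2; omega)]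
    · intro i h1 h2 hiI
      exact hgapP0 i hiI
  have hpF : p ∈ F := hFeq ▸ hpcp
  refine ⟨⟨?_, ?_, ?_⟩, hpF, ?_, ?_⟩
  · -- F ⊆ C
    intro x hx
    rw [hFeq] at hx
    rw [hC]
    exact ⟨hx.1, hx.2.1, hx.2.2.1, hx.2.2.2.1⟩
  · -- Convex F
    rw [hFeq]
    exact cp_convex k l a I
  · -- face property
    intro u v hu hv t ht0 ht1 hm
    rw [hC] at hu hv
    rw [hFeq] at hm ⊢
    have huv : ∀ i, 1 ≤ i → i < k → i ∉ I →
        u (i+1) - a (i+1) = u i - a i ∧ v (i+1) - a (i+1) = v i - a i := by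
      intro i h1 h2 hiI
      have h5 := hm.2.2.2.2 i h1 h2 hiI
      simp only [Pi.add_apply, Pi.smul_apply, smul_eq_mul] at h5
      have hgu : 0 ≤ (u i - a i) - (u (i+1) - a (i+1)) := by have := hu.1 i h1 h2; linarith
      have hgv : 0 ≤ (v i - a i) - (v (i+1) - a (i+1)) := by have := hv.1 i h1 h2; linarith
      have hz : t * ((u i - a i) - (u (i+1) - a (i+1)))
          + (1-t) * ((v i - a i) - (v (i+1) - a (i+1))) = 0 := by linarith [h5]
      have e1 : 0 ≤ t * ((u i - a i) - (u (i+1) - a (i+1))) := mul_nonneg ht0.le hgu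
      have e2 : 0 ≤ (1-t) * ((v i - a i) - (v (i+1) - a (i+1))) := mul_nonneg (by linarith) hgv
      have e3 : t * ((u i - a i) - (u (i+1) - a (i+1))) = 0 := by linarith
      have e4 : (1-t) * ((v i - a i) - (v (i+1) - a (i+1))) = 0 := by linarith
      constructor
      · rcases mul_eq_zero.mp e3 with h | h
        · linarith
        · linarith
      · rcases mul_eq_zero.mp e4 with h | h
        · linarith
        · linarith
    exact ⟨⟨hu.1, hu.2.1, hu.2.2.1, hu.2.2.2, fun i h1 h2 h3 => (huv i h1 h2 h3).1⟩,
      ⟨hv.1, hv.2.1, hv.2.2.1, hv.2.2.2, fun i h1 h2 h3 => (huv i h1 h2 h3).2⟩⟩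
  · -- p in the interior: no proper subface contains p
    intro G hG hne hpG
    apply hne
    refine Set.Subset.antisymm hG.1 ?_
    intro q hq
    have hqcp : CpAux k l a I q := by rw [hFeq] at hq; exact hq
    set ε : ℝ := 1 / (2 * l) with hε
    have hε0 : 0 < ε := by positivity
    have hεl : ε * l = 1/2 := by rw [hε]; field_simp
    -- gap bounds for q
    have hgq0 : ∀ i, 1 ≤ i → i < k → 0 ≤ (q i - a i) - (q (i+1) - a (i+1)) := by
      intro i h1 h2; have := hqcp.1 i h1 h2; linarith
    have hTq : ∑ i ∈ Finset.Ico 1 k, ((q i - a i) - (q (i+1) - a (i+1)))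
        = (q 1 - a 1) - (q k - a k) := tele (fun i => q i - a i) k 1 hk1
    have hTq0 : 0 ≤ (q 1 - a 1) - (q k - a k) := by
      rw [← hTq]
      exact Finset.sum_nonneg fun i hi => by
        rw [Finset.mem_Ico] at hi; exact hgq0 i hi.1 hi.2
    have hgql : ∀ i, 1 ≤ i → i < k → (q i - a i) - (q (i+1) - a (i+1)) ≤ l := by
      intro i h1 h2
      have hs : (q i - a i) - (q (i+1) - a (i+1))
          ≤ ∑ j ∈ Finset.Ico 1 k, ((q j - a j) - (q (j+1) - a (j+1))) := by
        refine Finset.single_le_sum (f := fun j => (q j - a j) - (q (j+1) - a (j+1)))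
          (fun j hj => by rw [Finset.mem_Ico] at hj; exact hgq0 j hj.1 hj.2)
          (Finset.mem_Ico.mpr ⟨h1, h2⟩)
      rw [hTq] at hs
      linarith [hqcp.2.1]
    -- the perturbed point
    set y : ℕ → ℝ := (1 + ε) • p - ε • q with hy
    have hyj : ∀ j, y j = (1 + ε) * p j - ε * q j := by
      intro j; rw [hy]; simp
    have hycp : CpAux k l a I y := by
      refine ⟨?_, ?_, ?_, ?_, ?_⟩
      · intro i h1 h2
        simp only [hyj]
        by_cases hiI : i ∈ I
        · have e1 : (1+ε) * ((p i - a i) - (p (i+1) - a (i+1))) = (1+ε) * 1 := by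
            rw [hgapP i hiI]
          have e2 : ε * ((q i - a i) - (q (i+1) - a (i+1))) ≤ ε * l :=
            mul_le_mul_of_nonneg_left (hgql i h1 h2) hε0.le
          linarith [e1, e2, hεl]
        · have e1 : (1+ε) * (p (i+1) - a (i+1)) = (1+ε) * (p i - a i) := by
            rw [hgapP0 i hiI]
          have e2 : ε * (q (i+1) - a (i+1)) = ε * (q i - a i) := by
            rw [hqcp.2.2.2.2 i h1 h2 hiI]
          linarith [e1, e2]
      · simp only [hyj]
        have e1 : (1+ε) * ((p 1 - a 1) - (p k - a k)) = (1+ε) * (I.card : ℝ) := by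
          rw [hTp]
        have e2 : 0 ≤ ε * ((q 1 - a 1) - (q k - a k)) := mul_nonneg hε0.le hTq0
        have e3 : (1+ε) * (I.card : ℝ) ≤ (1+ε) * ((l:ℝ) - 1) :=
          mul_le_mul_of_nonneg_left hcard (by linarith)
        linarith [e1, e2, e3, hεl]
      · simp only [hyj]
        rw [hpcp.2.2.1, hqcp.2.2.1]
      · intro j hj
        simp only [hyj]
        rw [hpcp.2.2.2.1 j hj, hqcp.2.2.2.1 j hj]
      · intro i h1 h2 hiI
        simp only [hyj]
        have e1 : (1+ε) * (p (i+1) - a (i+1)) = (1+ε) * (p i - a i) := by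
          rw [hgapP0 i hiI]
        have e2 : ε * (q (i+1) - a (i+1)) = ε * (q i - a i) := by
          rw [hqcp.2.2.2.2 i h1 h2 hiI]
        linarith [e1, e2]
    have hyF : y ∈ F := hFeq ▸ hycp
    have h1ε : (1:ℝ) + ε ≠ 0 := by positivity
    set t : ℝ := 1 / (1 + ε) with htdef
    have ht0 : 0 < t := by positivity
    have ht1 : t < 1 := by
      rw [htdef, div_lt_one (by positivity)]
      linarith
    have hpeq : t • y + (1 - t) • q = p := by
      funext j
      simp only [Pi.add_apply, Pi.smul_apply, smul_eq_mul, hyj]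
      rw [htdef]
      field_simp
      ring
    obtain ⟨-, hqG⟩ := hG.2.2 y q hyF hq t ht0 ht1 (by rw [hpeq]; exact hpG)
    exact hqG
  · -- p strictly dominant
    intro i h1 h2
    by_cases hiI : i ∈ I
    · have hg := hgapP i hiI
      have ha : a i = a (i+1) := ((hI i).mp hiI).2.2
      linarith
    · have hg := hgapP0 i hiI
      have hne : ¬ (a i = a (i+1)) := by
        intro h
        exact hiI ((hI i).mpr ⟨h1, h2, h⟩)
      have := hdom i h1 h2
      have : a (i+1) < a i := lt_of_le_of_ne this (fun h => hne h.symm)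
      linarith
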